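/- Let N be a positive integer and x₁,…,x_N elements of a commutative ring. Consider the 2N×2N matrix M whose rows are indexed by j = 0,…,2N−1 and whose columns come in consecutive pairs indexed by k = 1,…,N, the two entries of the k-th pair in row j being x_k^j and j·x_k^{j−1} (where the entry j·x_k^{j−1} is interpreted as 0 when j = 0). Then det M = ∏_{1≤j<k≤N} (x_j − x_k)^4. -/

import Mathlib

open Matrix Finset MvPolynomial

namespace ConfluentVandermondeAux

noncomputable section

variable (N : ℕ)

/-- Polynomial ring with variables `x k` (inl) and `ε k` (inr) over ℤ. -/
abbrev A := MvPolynomial (Fin N ⊕ Fin N) ℤ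

def kk (c : Fin (2 * N)) : Fin N := ⟨c.val / 2, Nat.div_lt_of_lt_mul c.isLt⟩

def xv (c : Fin (2 * N)) : A N := X (Sum.inl (kk N c))
def ev (c : Fin (2 * N)) : A N := X (Sum.inr (kk N c))

/-- The perturbed nodes. -/
def t (c : Fin (2 * N)) : A N := xv N c + if c.val % 2 = 1 then ev N c else 0

/-- The divided-difference confluent matrix over the polynomial ring. -/
def Cmat : Matrix (Fin (2 * N)) (Fin (2 * N)) (A N) :=
  of fun j c => if c.val % 2 = 0 then xv N c ^ (j : ℕ)
    else ∑ i ∈ Finset.range (j : ℕ), t N c ^ i * xv N c ^ ((j : ℕ) - 1 - i)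

lemma prod_Ioi_eq_prod_filter {M : Type*} [CommMonoid M] {n : ℕ} (g : Fin n → Fin n → M) :
    (∏ i : Fin n, ∏ j ∈ Finset.Ioi i, g i j)
      = ∏ p ∈ univ.filter (fun p : Fin n × Fin n => p.1 < p.2), g p.1 p.2 := by
  rw [Finset.prod_sigma']
  exact Finset.prod_nbij' (fun a => (a.1, a.2)) (fun p => ⟨p.1, p.2⟩)
    (by simp) (by simp) (by simp) (by simp) (by simp)

lemma key : (Cmat N).det
    = ∏ p ∈ (univ.filter (fun p : Fin (2*N) × Fin (2*N) => p.1 < p.2)).filter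
        (fun p => ¬ (p.1.val / 2 = p.2.val / 2)), (t N p.2 - t N p.1) := by
  classical
  set d : Fin (2*N) → A N := fun c => if c.val % 2 = 0 then 1 else ev N c with hd
  set E : Matrix (Fin (2*N)) (Fin (2*N)) (A N) := of fun a b =>
    if a = b then 1 else if a.val + 1 = b.val ∧ b.val % 2 = 1 then -1 else 0 with hE
  have hEdet : E.det = 1 := by
    rw [Matrix.det_of_upperTriangular]
    · apply Finset.prod_eq_one
      intro b _
      simp [hE]
    · intro a b h
      have h' : (b : ℕ) < (a : ℕ) := h
      simp only [hE, of_apply]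
      rw [if_neg (fun hab => by subst hab; omega), if_neg (by omega)]
  have hmul : Cmat N * Matrix.diagonal d = (vandermonde (t N))ᵀ * E := by
    refine Matrix.ext fun j b => ?_
    rw [Matrix.mul_diagonal, Matrix.mul_apply]
    have hsummand : ∀ a : Fin (2*N), (vandermonde (t N))ᵀ j a * E a b
        = (if a = b then t N a ^ (j:ℕ) else 0)
          + (if a.val + 1 = b.val ∧ b.val % 2 = 1 then -(t N a ^ (j:ℕ)) else 0) := by
      intro a
      by_cases h1 : a = b
      · have h2 : ¬ (a.val + 1 = b.val ∧ b.val % 2 = 1) := by subst h1; omega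
        simp [hE, h1, h2, vandermonde]
      · by_cases h2 : a.val + 1 = b.val ∧ b.val % 2 = 1
        · simp [hE, h1, h2, vandermonde]
        · simp [hE, h1, h2, vandermonde]
    rw [Finset.sum_congr rfl (fun a _ => hsummand a), Finset.sum_add_distrib,
      Finset.sum_ite_eq' univ b (fun a => t N a ^ (j:ℕ))]
    by_cases hb : b.val % 2 = 1
    · have hb1 : 1 ≤ b.val := by omega
      set b' : Fin (2*N) := ⟨b.val - 1, by have := b.isLt; omega⟩ with hb'
      have hsum2 : (∑ a : Fin (2*N), if a.val + 1 = b.val ∧ b.val % 2 = 1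
          then -(t N a ^ (j:ℕ)) else 0) = -(t N b' ^ (j:ℕ)) := by
        rw [Finset.sum_eq_single b']
        · rw [if_pos ⟨by have hbv : b'.val = b.val - 1 := rfl; omega, hb⟩]
        · intro a _ ha
          rw [if_neg]
          rintro ⟨h1, -⟩
          exact ha (Fin.ext (show a.val = b.val - 1 by omega))
        · simp
      rw [hsum2]
      have hbne : ¬ b.val % 2 = 0 := by omega
      have htb : t N b - xv N b = ev N b := by simp [t, hb]
      have hbv : b'.val = b.val - 1 := rfl
      have htb' : t N b' = xv N b := by
        have h1 : ¬ b'.val % 2 = 1 := by omega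
        have h2 : kk N b' = kk N b := Fin.ext (show b'.val / 2 = b.val / 2 by omega)
        simp [t, h1, xv, h2]
      simp only [Cmat, of_apply, if_neg hbne, hd]
      rw [← htb, geom_sum₂_mul]
      simp [htb', sub_eq_add_neg]
    · have hb0 : b.val % 2 = 0 := by omega
      have hsum2 : (∑ a : Fin (2*N), if a.val + 1 = b.val ∧ b.val % 2 = 1
          then -(t N a ^ (j:ℕ)) else 0) = 0 := by
        apply Finset.sum_eq_zero
        intro a _
        rw [if_neg (by omega)]
      rw [hsum2]
      have htb : t N b = xv N b := by simp [t, hb0, show ¬ b.val % 2 = 1 by omega]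
      simp [Cmat, hd, hb0, htb]
  have hdet1 : (Cmat N).det * (∏ c, d c)
      = ∏ p ∈ univ.filter (fun p : Fin (2*N) × Fin (2*N) => p.1 < p.2),
          (t N p.2 - t N p.1) := by
    rw [← Matrix.det_diagonal, ← Matrix.det_mul, hmul, Matrix.det_mul, hEdet, mul_one,
      Matrix.det_transpose, Matrix.det_vandermonde, prod_Ioi_eq_prod_filter]
  -- split the full product into diagonal and cross parts
  have hsplit := Finset.prod_filter_mul_prod_filter_not
    (univ.filter (fun p : Fin (2*N) × Fin (2*N) => p.1 < p.2))
    (fun p => p.1.val / 2 = p.2.val / 2) (fun p => t N p.2 - t N p.1)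
  -- diagonal part equals ∏ k, ε k
  have hdiag : (∏ p ∈ (univ.filter (fun p : Fin (2*N) × Fin (2*N) => p.1 < p.2)).filter
        (fun p => p.1.val / 2 = p.2.val / 2), (t N p.2 - t N p.1))
      = ∏ k : Fin N, (X (Sum.inr k) : A N) := by
    apply Finset.prod_nbij' (fun p => kk N p.1)
      (fun k => ((⟨2 * k.val, by omega⟩ : Fin (2*N)), (⟨2 * k.val + 1, by omega⟩ : Fin (2*N))))
    · intro a _; exact Finset.mem_univ _
    · intro k _
      simp only [Finset.mem_filter, Finset.mem_univ, true_and]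
      constructor
      · exact Fin.mk_lt_mk.mpr (by omega)
      · simp; omega
    · intro p hp
      simp only [Finset.mem_filter, Finset.mem_univ, true_and] at hp
      obtain ⟨hlt, heq⟩ := hp
      have h1 : (p.1 : ℕ) < (p.2 : ℕ) := hlt
      have h2 : p.2.val = p.1.val + 1 ∧ p.1.val % 2 = 0 := by omega
      ext
      · simp [kk]; omega
      · simp [kk]; omega
    · intro k _
      ext <;> simp [kk] <;> omega
    · intro p hp
      simp only [Finset.mem_filter, Finset.mem_univ, true_and] at hp
      obtain ⟨hlt, heq⟩ := hp
      have h1 : (p.1 : ℕ) < (p.2 : ℕ) := hlt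
      have h2 : p.2.val = p.1.val + 1 ∧ p.1.val % 2 = 0 := by omega
      have hp1 : ¬ p.1.val % 2 = 1 := by omega
      have hp2 : p.2.val % 2 = 1 := by omega
      have hkk : kk N p.2 = kk N p.1 := Fin.ext (by simp [kk]; omega)
      simp [t, hp1, hp2, hkk, ev, xv]
  -- ∏ c, d c equals ∏ k, ε k
  have hdval : (∏ c, d c) = ∏ k : Fin N, (X (Sum.inr k) : A N) := by
    rw [← Finset.prod_filter_mul_prod_filter_not univ (fun c : Fin (2*N) => c.val % 2 = 0) d]
    have h1 : (∏ c ∈ univ.filter (fun c : Fin (2*N) => c.val % 2 = 0), d c) = 1 :=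
      Finset.prod_eq_one (fun c hc => by
        simp only [Finset.mem_filter] at hc
        simp [hd, hc.2])
    rw [h1, one_mul]
    apply Finset.prod_nbij' (fun c => kk N c)
      (fun k => (⟨2 * k.val + 1, by omega⟩ : Fin (2*N)))
    · intro a _; exact Finset.mem_univ _
    · intro k _; simp
    · intro c hc
      simp only [Finset.mem_filter, Finset.mem_univ, true_and] at hc
      ext; simp [kk]; omega
    · intro k _; ext; simp [kk]; omega
    · intro c hc
      simp only [Finset.mem_filter, Finset.mem_univ, true_and] at hc
      simp [hd, hc, ev]
  have hDne : (∏ k : Fin N, (X (Sum.inr k) : A N)) ≠ 0 :=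
    Finset.prod_ne_zero_iff.mpr (fun k _ => MvPolynomial.X_ne_zero _)
  have := hdet1
  rw [hdval] at this
  rw [← hsplit, hdiag] at this
  exact mul_left_cancel₀ hDne ((mul_comm _ _).trans this)

end

end ConfluentVandermondeAux

open Matrix Finset MvPolynomial ConfluentVandermondeAux in
/-- The confluent Vandermonde determinant identity: the determinant of the `2N × 2N`
matrix whose columns come in pairs `(x_k^j, j·x_k^{j-1})` (rows indexed by
`j = 0, …, 2N-1`) equals the fourth power of the Vandermonde product. -/
theorem confluent_vandermonde {R : Type*} [CommRing R] (N : ℕ) (hN : 0 < N) (x : Fin N → R) :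
    (Matrix.of fun j c : Fin (2 * N) =>
        if c.val % 2 = 0 then
          x ⟨c.val / 2, by have := c.isLt; omega⟩ ^ (j : ℕ)
        else
          ((j : ℕ) : R) * x ⟨c.val / 2, by have := c.isLt; omega⟩ ^ ((j : ℕ) - 1)).det
      = ∏ p ∈ Finset.univ.filter (fun p : Fin N × Fin N => p.1 < p.2),
          (x p.1 - x p.2) ^ 4 := by
  classical
  set φ : A N →+* R := (aeval (Sum.elim x (fun _ => (0:R))) : A N →ₐ[ℤ] R).toRingHom with hφ
  have hφt : ∀ c, φ (t N c) = x (kk N c) := by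
    intro c
    simp [hφ, t, xv, ev]
    split <;> simp
  have hmap : (Matrix.of fun j c : Fin (2 * N) =>
        if c.val % 2 = 0 then
          x ⟨c.val / 2, by have := c.isLt; omega⟩ ^ (j : ℕ)
        else
          ((j : ℕ) : R) * x ⟨c.val / 2, by have := c.isLt; omega⟩ ^ ((j : ℕ) - 1))
      = (Cmat N).map φ := by
    ext j c
    have hkk : (⟨c.val / 2, by have := c.isLt; omega⟩ : Fin N) = kk N c := rfl
    simp only [Matrix.map_apply, Cmat, Matrix.of_apply, hkk]
    by_cases hc : c.val % 2 = 0
    · simp [hc, hφ, xv]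
    · rw [if_neg hc, if_neg hc]
      rw [map_sum]
      have : ∀ i ∈ Finset.range (j:ℕ),
          φ (t N c ^ i * xv N c ^ ((j:ℕ) - 1 - i)) = x (kk N c) ^ ((j:ℕ) - 1) := by
        intro i hi
        rw [Finset.mem_range] at hi
        rw [_root_.map_mul, _root_.map_pow, _root_.map_pow, hφt]
        simp only [hφ, xv]
        rw [show φ (X (Sum.inl (kk N c))) = x (kk N c) by simp [hφ, xv]]
        rw [← pow_add]
        congr 1
        omega
      rw [Finset.sum_congr rfl this, Finset.sum_const, Finset.card_range,
        nsmul_eq_mul]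
  rw [hmap, show (Cmat N).map φ = φ.mapMatrix (Cmat N) from (RingHom.mapMatrix_apply _ _).symm,
    ← RingHom.map_det, key, map_prod]
  have hfac : ∀ p ∈ (univ.filter (fun p : Fin (2*N) × Fin (2*N) => p.1 < p.2)).filter
      (fun p => ¬ (p.1.val / 2 = p.2.val / 2)),
      φ (t N p.2 - t N p.1) = x (kk N p.2) - x (kk N p.1) := by
    intro p _
    rw [map_sub, hφt, hφt]
  rw [Finset.prod_congr rfl hfac]
  -- now reindex: cross pairs in Fin (2N) ↦ pairs in Fin N × (Fin 2 × Fin 2)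
  have hrhs : (∏ p ∈ Finset.univ.filter (fun p : Fin N × Fin N => p.1 < p.2),
        (x p.1 - x p.2) ^ 4)
      = ∏ p ∈ Finset.univ.filter (fun p : Fin N × Fin N => p.1 < p.2),
        ∏ _q ∈ (Finset.univ : Finset (Fin 2 × Fin 2)), (x p.2 - x p.1) := by
    apply Finset.prod_congr rfl
    intro p _
    rw [Finset.prod_const, show (Finset.univ : Finset (Fin 2 × Fin 2)).card = 4 by simp,
      ← neg_sub (x p.2) (x p.1), Even.neg_pow ⟨2, rfl⟩]
  rw [hrhs, ← Finset.prod_product']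
  symm
  apply Finset.prod_nbij'
    (fun z : (Fin N × Fin N) × (Fin 2 × Fin 2) =>
      ((⟨2 * z.1.1.val + z.2.1.val, by have := z.1.1.isLt; have := z.2.1.isLt; omega⟩ : Fin (2*N)),
       (⟨2 * z.1.2.val + z.2.2.val, by have := z.1.2.isLt; have := z.2.2.isLt; omega⟩ : Fin (2*N))))
    (fun p : Fin (2*N) × Fin (2*N) =>
      ((kk N p.1, kk N p.2), ((⟨p.1.val % 2, by omega⟩ : Fin 2), (⟨p.2.val % 2, by omega⟩ : Fin 2))))
  · intro z hz
    simp only [Finset.mem_product, Finset.mem_filter, Finset.mem_univ, true_and] at hz ⊢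
    have h1 : z.1.1.val < z.1.2.val := hz.1
    have h2 := z.2.1.isLt
    have h3 := z.2.2.isLt
    constructor
    · exact Fin.mk_lt_mk.mpr (by omega)
    · show ¬ (2 * z.1.1.val + z.2.1.val) / 2 = (2 * z.1.2.val + z.2.2.val) / 2
      omega
  · intro p hp
    simp only [Finset.mem_filter, Finset.mem_univ, true_and] at hp
    have h1 : (p.1 : ℕ) < (p.2 : ℕ) := hp.1
    have h2 := hp.2
    simp only [Finset.mem_product, Finset.mem_filter, Finset.mem_univ, true_and, and_true]
    show p.1.val / 2 < p.2.val / 2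
    omega
  · intro z hz
    simp only [Finset.mem_product, Finset.mem_filter, Finset.mem_univ, true_and] at hz
    have h2 := z.2.1.isLt
    have h3 := z.2.2.isLt
    ext <;> simp [kk] <;> omega
  · intro p hp
    ext <;> simp [kk] <;> omega
  · intro z hz
    have h2 := z.2.1.isLt
    have h3 := z.2.2.isLt
    have e1 : kk N (⟨2 * z.1.2.val + z.2.2.val, by have := z.1.2.isLt; omega⟩ : Fin (2*N)) = z.1.2 :=
      Fin.ext (by simp [kk]; omega)
    have e2 : kk N (⟨2 * z.1.1.val + z.2.1.val, by have := z.1.1.isLt; omega⟩ : Fin (2*N)) = z.1.1 :=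
      Fin.ext (by simp [kk]; omega)
    simp only [e1, e2]
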